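/- Let g_c : ℝ → ℝ be a density generator and let (T₁, T₂) have the BLS(η₁,η₂,σ₁,σ₂,ρ; g_c) density. Then the random vectors (η₁/T₁, η₂/T₂) and (T₁/η₁, T₂/η₂) are identically distributed, and each has joint probability density (w₁,w₂) ↦ g_c((w̃₁² − 2ρ w̃₁ w̃₂ + w̃₂²)/(1−ρ²)) / (w₁ w₂ σ₁ σ₂ √(1−ρ²) Z_{g_c}) for w₁, w₂ > 0, where w̃ᵢ = (log wᵢ)/σᵢ; that is, both follow the BLS(1,1,σ₁,σ₂,ρ; g_c) distribution. -/

import Mathlib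

open MeasureTheory Real Set

/-- Standardized log-transform `t̃ = (log t − log η)/σ`. -/
noncomputable def logStd (η σ t : ℝ) : ℝ := (Real.log t - Real.log η) / σ

/-- The bivariate log-symmetric density `BLS(η₁,η₂,σ₁,σ₂,ρ; g)` with partition function
`Z_g = π ∫₀^∞ g`. -/
noncomputable def blsDensity (g : ℝ → ℝ) (η₁ η₂ σ₁ σ₂ ρ : ℝ) (t : ℝ × ℝ) : ℝ :=
  if 0 < t.1 ∧ 0 < t.2 then
    g ((logStd η₁ σ₁ t.1 ^ 2 - 2 * ρ * logStd η₁ σ₁ t.1 * logStd η₂ σ₂ t.2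
        + logStd η₂ σ₂ t.2 ^ 2) / (1 - ρ ^ 2)) /
      (t.1 * t.2 * σ₁ * σ₂ * Real.sqrt (1 - ρ ^ 2) * (π * ∫ u in Ioi (0 : ℝ), g u))
  else 0

lemma detOneSmul (c : ℝ) : LinearMap.det (c • (1 : ℝ →ₗ[ℝ] ℝ)) = c := by
  rw [LinearMap.det_smul]; simp

lemma detProdMapReal (f₁ f₂ : ℝ →ₗ[ℝ] ℝ) :
    LinearMap.det (f₁.prodMap f₂) = LinearMap.det f₁ * LinearMap.det f₂ := by
  let b : Module.Basis (Fin 1) ℝ ℝ := Module.Basis.singleton (Fin 1) ℝ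
  rw [← LinearMap.det_toMatrix (b.prod b), LinearMap.toMatrix_prodMap,
    Matrix.det_fromBlocks_zero₂₁, LinearMap.det_toMatrix, LinearMap.det_toMatrix]

lemma coeSmulOne (c : ℝ) :
    ((c • (1 : ℝ →L[ℝ] ℝ) : ℝ →L[ℝ] ℝ) : ℝ →ₗ[ℝ] ℝ) = c • (1 : ℝ →ₗ[ℝ] ℝ) := by
  ext; simp

lemma detCLM (c₁ c₂ : ℝ) :
    ((c₁ • (1 : ℝ →L[ℝ] ℝ)).prodMap (c₂ • (1 : ℝ →L[ℝ] ℝ))).det = c₁ * c₂ := by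
  rw [ContinuousLinearMap.det, ContinuousLinearMap.coe_prodMap, coeSmulOne, coeSmulOne,
    detProdMapReal, detOneSmul, detOneSmul]

lemma smulRightOne (c : ℝ) :
    ContinuousLinearMap.smulRight (1 : ℝ →L[ℝ] ℝ) c = c • (1 : ℝ →L[ℝ] ℝ) := by
  ext; simp [mul_comm]

lemma toSpanSingletonOne (c : ℝ) :
    ContinuousLinearMap.toSpanSingleton ℝ c = c • (1 : ℝ →L[ℝ] ℝ) := by
  ext; simp

lemma map_withDensity_aux
    (F G : ℝ × ℝ → ℝ)
    (hFQ : ∀ t : ℝ × ℝ, ¬(0 < t.1 ∧ 0 < t.2) → F t = 0)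
    (hGQ : ∀ t : ℝ × ℝ, ¬(0 < t.1 ∧ 0 < t.2) → G t = 0)
    (h k : ℝ × ℝ → ℝ × ℝ) (hh : Measurable h)
    (hmapsh : ∀ t : ℝ × ℝ, 0 < t.1 ∧ 0 < t.2 → 0 < (h t).1 ∧ 0 < (h t).2)
    (hmapsk : ∀ t : ℝ × ℝ, 0 < t.1 ∧ 0 < t.2 → 0 < (k t).1 ∧ 0 < (k t).2)
    (hhk : ∀ t : ℝ × ℝ, 0 < t.1 ∧ 0 < t.2 → h (k t) = t)
    (hkh : ∀ t : ℝ × ℝ, 0 < t.1 ∧ 0 < t.2 → k (h t) = t)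
    (k' : ℝ × ℝ → (ℝ × ℝ) →L[ℝ] (ℝ × ℝ))
    (hk' : ∀ t : ℝ × ℝ, 0 < t.1 ∧ 0 < t.2 → HasFDerivAt k (k' t) t)
    (hdet : ∀ t : ℝ × ℝ, 0 < t.1 ∧ 0 < t.2 → |(k' t).det| * F (k t) = G t) :
    Measure.map h (volume.withDensity fun t => ENNReal.ofReal (F t))
      = volume.withDensity fun t => ENNReal.ofReal (G t) := by
  have hQmeas : MeasurableSet {t : ℝ × ℝ | 0 < t.1 ∧ 0 < t.2} :=
    (measurableSet_lt measurable_const measurable_fst).inter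
      (measurableSet_lt measurable_const measurable_snd)
  set Q : Set (ℝ × ℝ) := {t : ℝ × ℝ | 0 < t.1 ∧ 0 < t.2} with hQdef
  have trunc : ∀ (F₀ : ℝ × ℝ → ℝ), (∀ t : ℝ × ℝ, ¬(0 < t.1 ∧ 0 < t.2) → F₀ t = 0) →
      ∀ (A : Set (ℝ × ℝ)),
      ∫⁻ t in A, ENNReal.ofReal (F₀ t) = ∫⁻ t in A ∩ Q, ENNReal.ofReal (F₀ t) := by
    intro F₀ h0 A
    rw [← lintegral_inter_add_diff (fun t => ENNReal.ofReal (F₀ t)) A hQmeas]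
    have hz : ∫⁻ t in A \ Q, ENNReal.ofReal (F₀ t) = 0 := by
      have hsub : A \ Q ⊆ Qᶜ := fun x hx => hx.2
      refine le_antisymm (le_trans (lintegral_mono_set hsub) (le_of_eq ?_)) (zero_le)
      rw [setLIntegral_congr_fun hQmeas.compl (fun t ht => ?_), lintegral_zero]
      rw [h0 t ht, ENNReal.ofReal_zero]
    rw [hz, add_zero]
  ext s hs
  rw [Measure.map_apply hh hs, withDensity_apply _ (hh hs), withDensity_apply _ hs]
  have hinj : Set.InjOn k Q := fun a ha b hb hab => by
    rw [← hhk a ha, ← hhk b hb, hab]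
  have key : h ⁻¹' s ∩ Q = k '' (s ∩ Q) := by
    ext t
    constructor
    · rintro ⟨hts, htQ⟩
      exact ⟨h t, ⟨hts, hmapsh t htQ⟩, hkh t htQ⟩
    · rintro ⟨y, ⟨hys, hyQ⟩, rfl⟩
      exact ⟨by rw [Set.mem_preimage, hhk y hyQ]; exact hys, hmapsk y hyQ⟩
  calc ∫⁻ t in h ⁻¹' s, ENNReal.ofReal (F t)
      = ∫⁻ t in h ⁻¹' s ∩ Q, ENNReal.ofReal (F t) := trunc F hFQ _
    _ = ∫⁻ t in k '' (s ∩ Q), ENNReal.ofReal (F t) := by rw [key]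
    _ = ∫⁻ t in s ∩ Q, ENNReal.ofReal |(k' t).det| * ENNReal.ofReal (F (k t)) :=
        lintegral_image_eq_lintegral_abs_det_fderiv_mul volume (hs.inter hQmeas)
          (fun t ht => (hk' t ht.2).hasFDerivWithinAt)
          (hinj.mono Set.inter_subset_right) _
    _ = ∫⁻ t in s ∩ Q, ENNReal.ofReal (G t) := by
        refine setLIntegral_congr_fun (hs.inter hQmeas) (fun t ht => ?_)
        rw [← ENNReal.ofReal_mul (abs_nonneg _), hdet t ht.2]
    _ = ∫⁻ t in s, ENNReal.ofReal (G t) := (trunc G hGQ s).symm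

theorem bls_reciprocal_property
    {Ω : Type*} [MeasurableSpace Ω] (P : Measure Ω) [IsProbabilityMeasure P]
    (g : ℝ → ℝ) (hg_meas : Measurable g) (hg_nonneg : ∀ x, 0 ≤ g x)
    (hg_pos : 0 < ∫ u in Ioi (0 : ℝ), g u) (hg_int : IntegrableOn g (Ioi 0))
    (η₁ η₂ σ₁ σ₂ ρ : ℝ) (hη₁ : 0 < η₁) (hη₂ : 0 < η₂) (hσ₁ : 0 < σ₁) (hσ₂ : 0 < σ₂)
    (hρ : ρ ∈ Ioo (-1 : ℝ) 1)
    (T₁ T₂ : Ω → ℝ) (hT₁ : Measurable T₁) (hT₂ : Measurable T₂)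
    (hT : Measure.map (fun ω => (T₁ ω, T₂ ω)) P
      = (volume : Measure (ℝ × ℝ)).withDensity
          (fun t => ENNReal.ofReal (blsDensity g η₁ η₂ σ₁ σ₂ ρ t))) :
    Measure.map (fun ω => (η₁ / T₁ ω, η₂ / T₂ ω)) P
        = Measure.map (fun ω => (T₁ ω / η₁, T₂ ω / η₂)) P ∧
    Measure.map (fun ω => (η₁ / T₁ ω, η₂ / T₂ ω)) P
        = (volume : Measure (ℝ × ℝ)).withDensity
            (fun w => ENNReal.ofReal (blsDensity g 1 1 σ₁ σ₂ ρ w)) ∧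
    Measure.map (fun ω => (T₁ ω / η₁, T₂ ω / η₂)) P
        = (volume : Measure (ℝ × ℝ)).withDensity
            (fun w => ENNReal.ofReal (blsDensity g 1 1 σ₁ σ₂ ρ w)) := by
  have hρsq : 0 < 1 - ρ ^ 2 := by
    have h1 := hρ.1; have h2 := hρ.2; nlinarith
  have hsqrt : 0 < Real.sqrt (1 - ρ ^ 2) := Real.sqrt_pos.2 hρsq
  have hZ : 0 < π * ∫ u in Ioi (0 : ℝ), g u := mul_pos Real.pi_pos hg_pos
  have hFQ : ∀ t : ℝ × ℝ, ¬(0 < t.1 ∧ 0 < t.2) → blsDensity g η₁ η₂ σ₁ σ₂ ρ t = 0 :=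
    fun t ht => if_neg ht
  have hGQ : ∀ t : ℝ × ℝ, ¬(0 < t.1 ∧ 0 < t.2) → blsDensity g 1 1 σ₁ σ₂ ρ t = 0 :=
    fun t ht => if_neg ht
  have hφm : Measurable (fun t : ℝ × ℝ => (η₁ / t.1, η₂ / t.2)) :=
    (measurable_const.div measurable_fst).prodMk (measurable_const.div measurable_snd)
  have hψm : Measurable (fun t : ℝ × ℝ => (t.1 / η₁, t.2 / η₂)) :=
    (measurable_fst.div measurable_const).prodMk (measurable_snd.div measurable_const)
  -- one-dimensional derivatives
  have hd1 : ∀ (η : ℝ), 0 < η → ∀ x : ℝ, 0 < x →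
      HasFDerivAt (fun y : ℝ => η / y) ((-(η / x ^ 2)) • (1 : ℝ →L[ℝ] ℝ)) x := by
    intro η hη x hx
    have h := ((hasDerivAt_inv hx.ne').const_mul η).hasFDerivAt
    rw [toSpanSingletonOne] at h
    have : η * -(x ^ 2)⁻¹ = -(η / x ^ 2) := by field_simp
    rw [this] at h
    simpa only [div_eq_mul_inv] using h

  have hd2 : ∀ (η x : ℝ),
      HasFDerivAt (fun y : ℝ => η * y) (η • (1 : ℝ →L[ℝ] ℝ)) x := by
    intro η x
    have h := ((hasDerivAt_id x).const_mul η).hasFDerivAt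
    rw [toSpanSingletonOne] at h
    simpa using h
  -- log identities
  have hlog1 : ∀ (η σ : ℝ), 0 < η → ∀ x : ℝ, 0 < x →
      logStd η σ (η / x) = -(logStd 1 σ x) := by
    intro η σ hη x hx
    unfold logStd
    rw [Real.log_div hη.ne' hx.ne', Real.log_one]
    ring
  have hlog2 : ∀ (η σ : ℝ), 0 < η → ∀ x : ℝ, 0 < x →
      logStd η σ (η * x) = logStd 1 σ x := by
    intro η σ hη x hx
    unfold logStd
    rw [Real.log_mul hη.ne' hx.ne', Real.log_one]
    ring
  -- the reciprocal map case
  have hmap1 : Measure.map (fun t : ℝ × ℝ => (η₁ / t.1, η₂ / t.2))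
      (volume.withDensity fun t => ENNReal.ofReal (blsDensity g η₁ η₂ σ₁ σ₂ ρ t))
      = volume.withDensity fun t => ENNReal.ofReal (blsDensity g 1 1 σ₁ σ₂ ρ t) := by
    refine map_withDensity_aux _ _ hFQ hGQ _ (fun t : ℝ × ℝ => (η₁ / t.1, η₂ / t.2)) hφm
      (fun t ht => ⟨div_pos hη₁ ht.1, div_pos hη₂ ht.2⟩)
      (fun t ht => ⟨div_pos hη₁ ht.1, div_pos hη₂ ht.2⟩)
      ?_ ?_
      (fun t => ((-(η₁ / t.1 ^ 2)) • (1 : ℝ →L[ℝ] ℝ)).prodMap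
        ((-(η₂ / t.2 ^ 2)) • (1 : ℝ →L[ℝ] ℝ)))
      ?_ ?_
    · intro t ht
      have h1 : η₁ / (η₁ / t.1) = t.1 := by
        rw [div_div_eq_mul_div, mul_comm, mul_div_assoc, div_self hη₁.ne', mul_one]
      have h2 : η₂ / (η₂ / t.2) = t.2 := by
        rw [div_div_eq_mul_div, mul_comm, mul_div_assoc, div_self hη₂.ne', mul_one]
      exact Prod.ext h1 h2
    · intro t ht
      have h1 : η₁ / (η₁ / t.1) = t.1 := by
        rw [div_div_eq_mul_div, mul_comm, mul_div_assoc, div_self hη₁.ne', mul_one]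
      have h2 : η₂ / (η₂ / t.2) = t.2 := by
        rw [div_div_eq_mul_div, mul_comm, mul_div_assoc, div_self hη₂.ne', mul_one]
      exact Prod.ext h1 h2
    · intro t ht
      exact HasFDerivAt.prodMap t (hd1 η₁ hη₁ t.1 ht.1) (hd1 η₂ hη₂ t.2 ht.2)
    · intro t ht
      obtain ⟨ht1, ht2⟩ := ht
      rw [detCLM]
      show |(-(η₁ / t.1 ^ 2)) * (-(η₂ / t.2 ^ 2))| *
        blsDensity g η₁ η₂ σ₁ σ₂ ρ (η₁ / t.1, η₂ / t.2) = blsDensity g 1 1 σ₁ σ₂ ρ t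
      unfold blsDensity
      rw [if_pos (show (0:ℝ) < η₁ / t.1 ∧ (0:ℝ) < η₂ / t.2 from
          ⟨div_pos hη₁ ht1, div_pos hη₂ ht2⟩), if_pos ⟨ht1, ht2⟩]
      simp only
      rw [hlog1 η₁ σ₁ hη₁ t.1 ht1, hlog1 η₂ σ₂ hη₂ t.2 ht2]
      rw [neg_mul_neg, abs_of_pos (mul_pos (div_pos hη₁ (pow_pos ht1 2))
        (div_pos hη₂ (pow_pos ht2 2)))]
      have earg : ((-(logStd 1 σ₁ t.1)) ^ 2
          - 2 * ρ * (-(logStd 1 σ₁ t.1)) * (-(logStd 1 σ₂ t.2))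
          + (-(logStd 1 σ₂ t.2)) ^ 2) / (1 - ρ ^ 2)
          = (logStd 1 σ₁ t.1 ^ 2 - 2 * ρ * logStd 1 σ₁ t.1 * logStd 1 σ₂ t.2
          + logStd 1 σ₂ t.2 ^ 2) / (1 - ρ ^ 2) := by ring
      rw [earg]
      field_simp
  -- the scaling map case
  have hmap2 : Measure.map (fun t : ℝ × ℝ => (t.1 / η₁, t.2 / η₂))
      (volume.withDensity fun t => ENNReal.ofReal (blsDensity g η₁ η₂ σ₁ σ₂ ρ t))
      = volume.withDensity fun t => ENNReal.ofReal (blsDensity g 1 1 σ₁ σ₂ ρ t) := by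
    refine map_withDensity_aux _ _ hFQ hGQ _ (fun t : ℝ × ℝ => (η₁ * t.1, η₂ * t.2)) hψm
      (fun t ht => ⟨div_pos ht.1 hη₁, div_pos ht.2 hη₂⟩)
      (fun t ht => ⟨mul_pos hη₁ ht.1, mul_pos hη₂ ht.2⟩)
      ?_ ?_
      (fun _ => (η₁ • (1 : ℝ →L[ℝ] ℝ)).prodMap (η₂ • (1 : ℝ →L[ℝ] ℝ)))
      ?_ ?_
    · intro t ht
      refine Prod.ext ?_ ?_ <;> · simp only; field_simp
    · intro t ht
      refine Prod.ext ?_ ?_ <;> · simp only; field_simp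
    · intro t ht
      exact HasFDerivAt.prodMap t (hd2 η₁ t.1) (hd2 η₂ t.2)
    · intro t ht
      obtain ⟨ht1, ht2⟩ := ht
      rw [detCLM]
      show |η₁ * η₂| * blsDensity g η₁ η₂ σ₁ σ₂ ρ (η₁ * t.1, η₂ * t.2)
        = blsDensity g 1 1 σ₁ σ₂ ρ t
      unfold blsDensity
      rw [if_pos (show (0:ℝ) < η₁ * t.1 ∧ (0:ℝ) < η₂ * t.2 from
          ⟨mul_pos hη₁ ht1, mul_pos hη₂ ht2⟩), if_pos ⟨ht1, ht2⟩]
      simp only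
      rw [hlog2 η₁ σ₁ hη₁ t.1 ht1, hlog2 η₂ σ₂ hη₂ t.2 ht2,
        abs_of_pos (mul_pos hη₁ hη₂)]
      field_simp
  have e1 : Measure.map (fun ω => (η₁ / T₁ ω, η₂ / T₂ ω)) P
      = volume.withDensity fun w => ENNReal.ofReal (blsDensity g 1 1 σ₁ σ₂ ρ w) := by
    have hc : Measure.map (fun t : ℝ × ℝ => (η₁ / t.1, η₂ / t.2))
        (Measure.map (fun ω => (T₁ ω, T₂ ω)) P)
        = Measure.map (fun ω => (η₁ / T₁ ω, η₂ / T₂ ω)) P :=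
      Measure.map_map hφm (hT₁.prodMk hT₂)
    rw [← hc, hT, hmap1]
  have e2 : Measure.map (fun ω => (T₁ ω / η₁, T₂ ω / η₂)) P
      = volume.withDensity fun w => ENNReal.ofReal (blsDensity g 1 1 σ₁ σ₂ ρ w) := by
    have hc : Measure.map (fun t : ℝ × ℝ => (t.1 / η₁, t.2 / η₂))
        (Measure.map (fun ω => (T₁ ω, T₂ ω)) P)
        = Measure.map (fun ω => (T₁ ω / η₁, T₂ ω / η₂)) P :=
      Measure.map_map hψm (hT₁.prodMk hT₂)
    rw [← hc, hT, hmap2]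
  exact ⟨e1.trans e2.symm, e1, e2⟩
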